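/- Suppose F = (1/n) Σ_{i=1}^n f_i is average-L-smooth. Consider a single outer-loop iteration of SARAH with learning rate η satisfying 0 < η ≤ 2/(L(√(1+4m)+1)). Then for any outer iteration s ≥ 1, E[F(w_{m+1}^{(s)})] ≤ E[F(w_0^{(s)})] − (η/2) Σ_{t=0}^{m} E[‖∇F(w_t^{(s)})‖²]. -/

import Mathlib

open Finset RealInnerProductSpace


noncomputable section

abbrev Vec (d : ℕ) : Type := EuclideanSpace ℝ (Fin d)

/-- One inner loop of SARAH: `(innerSeq d n f F η x0 ι t) = (w_t, v_t)`, where the step from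
`t` to `t+1` uses the sampled index `ι t` (so `ι t` plays the role of `i_{t+1}`). -/
noncomputable def innerSeq (d n : ℕ) (f : Fin n → Vec d → ℝ) (F : Vec d → ℝ) (η : ℝ)
    (x0 : Vec d) (ι : ℕ → Fin n) : ℕ → Vec d × Vec d
  | 0 => (x0, gradient F x0)
  | t + 1 =>
    let p := innerSeq d n f F η x0 ι t
    let w := p.1 - η • p.2
    (w, gradient (f (ι t)) w - gradient (f (ι t)) p.1 + p.2)

/-- Outer iterates of SARAH: `outerSeq d n m f F η w0 ω s = w̃_s`, where the `s`-th outer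
loop uses the index sequence `ω s` and `w̃_s = w_{m+1}^{(s)}`. -/
noncomputable def outerSeq (d n m : ℕ) (f : Fin n → Vec d → ℝ) (F : Vec d → ℝ) (η : ℝ)
    (w0 : Vec d) (ω : ℕ → ℕ → Fin n) : ℕ → Vec d
  | 0 => w0
  | s + 1 => (innerSeq d n f F η (outerSeq d n m f F η w0 ω s) (ω s) (m + 1)).1

/-- Expectation over the uniformly random index sequences of SARAH with (at least) `S` outer
loops of `m` inner steps each: the average of `X` over all `ω : Fin S → Fin m → Fin n`,
extended by a dummy index outside this range. -/
noncomputable def sarahE (n m S : ℕ) (hn : 0 < n) (X : (ℕ → ℕ → Fin n) → ℝ) : ℝ :=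
  (∑ ω : Fin S → Fin m → Fin n,
      X fun s t => if h : s < S ∧ t < m then ω ⟨s, h.1⟩ ⟨t, h.2⟩ else ⟨0, hn⟩) /
    (Fintype.card (Fin S → Fin m → Fin n) : ℝ)


section SarahHelpers

variable {E : Type*} [NormedAddCommGroup E] [InnerProductSpace ℝ E] [CompleteSpace E]

omit [CompleteSpace E] in
lemma var_identity (n : ℕ) (hn : 0 < n) (c : E) (X : Fin n → E) :
    ∑ i, ‖c + ((n : ℝ)⁻¹ • ∑ j, X j) - X i‖ ^ 2
      = n * ‖c‖ ^ 2 - n * ‖(n : ℝ)⁻¹ • ∑ j, X j‖ ^ 2 + ∑ i, ‖X i‖ ^ 2 := by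
  have hn' : (n : ℝ) ≠ 0 := Nat.cast_ne_zero.mpr hn.ne'
  set Xb : E := (n : ℝ)⁻¹ • ∑ j, X j with hXb
  have hsum : ∑ j, X j = (n : ℝ) • Xb := by rw [hXb, smul_inv_smul₀ hn']
  have expand : ∀ i : Fin n, ‖c + Xb - X i‖ ^ 2
      = ‖c + Xb‖ ^ 2 - 2 * ⟪c + Xb, X i⟫ + ‖X i‖ ^ 2 := fun i => by
    rw [norm_sub_sq_real]
  rw [Finset.sum_congr rfl fun i _ => expand i]
  rw [Finset.sum_add_distrib, Finset.sum_sub_distrib, Finset.sum_const, ← Finset.mul_sum,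
    ← inner_sum, hsum, real_inner_smul_right, norm_add_sq_real, inner_add_left,
    real_inner_self_eq_norm_sq]
  simp only [card_univ, Fintype.card_fin, nsmul_eq_mul]
  ring

lemma descent_lemma {F : E → ℝ} (hF : Differentiable ℝ F) {L : ℝ}
    (hlip : ∀ a b : E, ‖gradient F a - gradient F b‖ ≤ L * ‖a - b‖) (x y : E) :
    F y ≤ F x + ⟪gradient F x, y - x⟫ + L / 2 * ‖y - x‖ ^ 2 := by
  set v : E := y - x with hv
  set g : ℝ → ℝ := fun t => F (x + t • v) - t * ⟪gradient F x, v⟫ - t ^ 2 * (L / 2 * ‖v‖ ^ 2)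
    with hg
  have hgrad : ∀ z : E, ∀ u : E, (fderiv ℝ F z) u = ⟪gradient F z, u⟫ := by
    intro z u
    rw [gradient, InnerProductSpace.toDual_symm_apply]
  have hderiv : ∀ t : ℝ, HasDerivAt g
      (⟪gradient F (x + t • v), v⟫ - ⟪gradient F x, v⟫ - t * (L * ‖v‖ ^ 2)) t := by
    intro t
    have hline : HasDerivAt (fun t : ℝ => x + t • v) v t := by
      simpa using ((hasDerivAt_id t).smul_const v).const_add x
    have h1 : HasDerivAt (fun t : ℝ => F (x + t • v)) ⟪gradient F (x + t • v), v⟫ t := by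
      have := (hF (x + t • v)).hasFDerivAt.comp_hasDerivAt t hline
      rw [hgrad] at this
      exact this
    have h2 : HasDerivAt (fun t : ℝ => t * ⟪gradient F x, v⟫) ⟪gradient F x, v⟫ t := by
      simpa using (hasDerivAt_id t).mul_const ⟪gradient F x, v⟫
    have h3 : HasDerivAt (fun t : ℝ => t ^ 2 * (L / 2 * ‖v‖ ^ 2)) (t * (L * ‖v‖ ^ 2)) t := by
      have := (hasDerivAt_pow 2 t).mul_const (L / 2 * ‖v‖ ^ 2)
      refine this.congr_deriv ?_
      rw [show (2:ℕ) - 1 = 1 from rfl, pow_one]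
      ring
    exact (h1.sub h2).sub h3
  have hanti : AntitoneOn g (Set.Icc 0 1) := by
    apply antitoneOn_of_deriv_nonpos (convex_Icc 0 1)
    · exact fun t _ => ((hderiv t).differentiableAt).continuousAt.continuousWithinAt
    · exact fun t _ => ((hderiv t).differentiableAt).differentiableWithinAt
    · intro t ht
      rw [interior_Icc] at ht
      rw [(hderiv t).deriv]
      have hb : ⟪gradient F (x + t • v) - gradient F x, v⟫
          ≤ ‖gradient F (x + t • v) - gradient F x‖ * ‖v‖ := real_inner_le_norm _ _
      have hl : ‖gradient F (x + t • v) - gradient F x‖ ≤ L * (t * ‖v‖) := by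
        have := hlip (x + t • v) x
        simpa [norm_smul, abs_of_nonneg ht.1.le, mul_assoc] using this
      have hv0 : (0:ℝ) ≤ ‖v‖ := norm_nonneg v
      have := hb.trans (mul_le_mul_of_nonneg_right hl hv0)
      rw [inner_sub_left] at this
      nlinarith [this]
  have := hanti (Set.left_mem_Icc.mpr zero_le_one) (Set.right_mem_Icc.mpr zero_le_one)
    zero_le_one
  simp only [hg] at this
  simp only [one_smul, zero_smul, add_zero, one_mul, zero_mul, sub_zero, one_pow, ne_eq,
    zero_pow, add_sub_cancel] at this
  have hy : x + v = y := by rw [hv]; abel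
  rw [hy] at this
  linarith

end SarahHelpers

section Core

variable {d n : ℕ}

lemma gradF_formula (hn : 0 < n) (f : Fin n → Vec d → ℝ) (F : Vec d → ℝ)
    (hF : ∀ w, F w = (∑ i, f i w) / n)
    (hdiff : ∀ i, Differentiable ℝ (f i)) (w : Vec d) :
    HasGradientAt F ((n : ℝ)⁻¹ • ∑ i, gradient (f i) w) w := by
  have hfd : HasFDerivAt F ((n : ℝ)⁻¹ • ∑ i, fderiv ℝ (f i) w) w := by
    have h1 : HasFDerivAt (fun w : Vec d => (∑ i, f i w) / n)
        ((n : ℝ)⁻¹ • ∑ i, fderiv ℝ (f i) w) w := by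
      have hsum : HasFDerivAt (fun w : Vec d => ∑ i, f i w) (∑ i, fderiv ℝ (f i) w) w :=
        HasFDerivAt.fun_sum fun i _ => (hdiff i w).hasFDerivAt
      have := hsum.const_smul ((n : ℝ)⁻¹)
      rw [show (fun w : Vec d => (∑ i, f i w) / n) = fun w => (n:ℝ)⁻¹ • ∑ i, f i w from
        funext fun w => by rw [smul_eq_mul, div_eq_inv_mul]]
      exact this
    exact h1.congr_of_eventuallyEq (Filter.Eventually.of_forall fun w => (hF w))
  have := hasFDerivAt_iff_hasGradientAt.mp hfd
  convert this using 1
  simp only [gradient, map_smulₛₗ, map_sum, starRingEnd_apply, star_trivial]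

lemma gradF_lip (hn : 0 < n) (f : Fin n → Vec d → ℝ) (F : Vec d → ℝ)
    (hF : ∀ w, F w = (∑ i, f i w) / n)
    (hdiff : ∀ i, Differentiable ℝ (f i)) {L : ℝ} (hL : 0 < L)
    (havg : ∀ w w' : Vec d,
      (∑ i, ‖gradient (f i) w - gradient (f i) w'‖ ^ 2) / n ≤ L ^ 2 * ‖w - w'‖ ^ 2)
    (w w' : Vec d) : ‖gradient F w - gradient F w'‖ ≤ L * ‖w - w'‖ := by
  have hn' : (0:ℝ) < (n : ℝ) := Nat.cast_pos.mpr hn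
  have hgw := (gradF_formula hn f F hF hdiff w).gradient
  have hgw' := (gradF_formula hn f F hF hdiff w').gradient
  rw [hgw, hgw', ← smul_sub, ← Finset.sum_sub_distrib]
  rw [norm_smul]
  have h1 : ‖∑ i, (gradient (f i) w - gradient (f i) w')‖
      ≤ ∑ i, ‖gradient (f i) w - gradient (f i) w'‖ := norm_sum_le _ _
  have h2 : (∑ i, ‖gradient (f i) w - gradient (f i) w'‖) ^ 2
      ≤ (n : ℝ) * ∑ i, ‖gradient (f i) w - gradient (f i) w'‖ ^ 2 := by
    simpa using sq_sum_le_card_mul_sum_sq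
      (s := Finset.univ) (f := fun i => ‖gradient (f i) w - gradient (f i) w'‖)
  have h3 : (∑ i, ‖gradient (f i) w - gradient (f i) w'‖ ^ 2)
      ≤ (n : ℝ) * (L ^ 2 * ‖w - w'‖ ^ 2) := by
    have := havg w w'
    rw [div_le_iff₀ hn'] at this
    linarith
  have h4 : (∑ i, ‖gradient (f i) w - gradient (f i) w'‖) ^ 2
      ≤ ((n : ℝ) * (L * ‖w - w'‖)) ^ 2 := by
    calc _ ≤ (n : ℝ) * ∑ i, ‖gradient (f i) w - gradient (f i) w'‖ ^ 2 := h2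
    _ ≤ (n : ℝ) * ((n : ℝ) * (L ^ 2 * ‖w - w'‖ ^ 2)) :=
        mul_le_mul_of_nonneg_left h3 hn'.le
    _ = ((n : ℝ) * (L * ‖w - w'‖)) ^ 2 := by ring
  have h5 : ∑ i, ‖gradient (f i) w - gradient (f i) w'‖ ≤ (n : ℝ) * (L * ‖w - w'‖) := by
    have hb : (0:ℝ) ≤ (n : ℝ) * (L * ‖w - w'‖) := by positivity
    have ha : (0:ℝ) ≤ ∑ i, ‖gradient (f i) w - gradient (f i) w'‖ :=
      Finset.sum_nonneg fun i _ => norm_nonneg _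
    exact (pow_le_pow_iff_left₀ ha hb two_ne_zero).mp h4
  have : ‖(n:ℝ)⁻¹‖ = (n:ℝ)⁻¹ := by
    rw [Real.norm_eq_abs, abs_of_nonneg (by positivity)]
  rw [this]
  calc (n:ℝ)⁻¹ * ‖∑ i, (gradient (f i) w - gradient (f i) w')‖
      ≤ (n:ℝ)⁻¹ * ((n : ℝ) * (L * ‖w - w'‖)) := by
        apply mul_le_mul_of_nonneg_left (h1.trans h5) (by positivity)
    _ = L * ‖w - w'‖ := by field_simp

lemma coef_bound {L η : ℝ} (m : ℕ) (hL : 0 < L) (hη0 : 0 < η)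
    (hη : η ≤ 2 / (L * (Real.sqrt (1 + 4 * (m : ℝ)) + 1))) :
    (m : ℝ) * (L ^ 2 * η ^ 2) + L * η ≤ 1 := by
  set r : ℝ := Real.sqrt (1 + 4 * (m : ℝ)) with hr
  have hm0 : (0:ℝ) ≤ (m : ℝ) := Nat.cast_nonneg m
  have hr2 : r ^ 2 = 1 + 4 * (m : ℝ) := Real.sq_sqrt (by linarith)
  have hr1 : 1 ≤ r := by
    rw [hr]
    have : (1:ℝ) = Real.sqrt 1 := (Real.sqrt_one).symm
    rw [this]
    exact Real.sqrt_le_sqrt (by linarith)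
  have hden : 0 < L * (r + 1) := by positivity
  have hx : η * (L * (r + 1)) ≤ 2 := by
    rw [← le_div_iff₀ hden]
    exact hη
  have h1 : 0 ≤ 2 - L * η * (r + 1) := by nlinarith
  have h2 : 0 ≤ (r - 1) * (L * η) + 2 := by
    have := mul_nonneg (by linarith : (0:ℝ) ≤ r - 1) (by positivity : (0:ℝ) ≤ L * η)
    linarith
  have hm : (m : ℝ) = (r ^ 2 - 1) / 4 := by linarith
  rw [hm]
  nlinarith [mul_nonneg h1 h2]

/-- Extension of a finite index tuple by the dummy index. -/
def iext (n m : ℕ) (hn : 0 < n) (σ : Fin m → Fin n) : ℕ → Fin n :=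
  fun t => if h : t < m then σ ⟨t, h⟩ else ⟨0, hn⟩

lemma innerSeq_congr (d n : ℕ) (f : Fin n → Vec d → ℝ) (F : Vec d → ℝ) (η : ℝ) (x0 : Vec d)
    (ι ι' : ℕ → Fin n) : ∀ t : ℕ, (∀ k, k < t → ι k = ι' k) →
    innerSeq d n f F η x0 ι t = innerSeq d n f F η x0 ι' t
  | 0, _ => rfl
  | t+1, h => by
    have ih := innerSeq_congr d n f F η x0 ι ι' t (fun k hk => h k (Nat.lt_succ_of_lt hk))
    simp only [innerSeq, ih, h t (Nat.lt_succ_self t)]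

variable (d n) in
/-- Inner-loop iterates as a function of the finite index tuple. -/
noncomputable def WV (m : ℕ) (hn : 0 < n) (f : Fin n → Vec d → ℝ) (F : Vec d → ℝ) (η : ℝ)
    (x0 : Vec d) (σ : Fin m → Fin n) (t : ℕ) : Vec d × Vec d :=
  innerSeq d n f F η x0 (iext n m hn σ) t

lemma WV_succ (m : ℕ) (hn : 0 < n) (f : Fin n → Vec d → ℝ) (F : Vec d → ℝ) (η : ℝ)
    (x0 : Vec d) (σ : Fin m → Fin n) (t : ℕ) :
    WV d n m hn f F η x0 σ (t+1)
      = ((WV d n m hn f F η x0 σ t).1 - η • (WV d n m hn f F η x0 σ t).2,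
        gradient (f (iext n m hn σ t))
            ((WV d n m hn f F η x0 σ t).1 - η • (WV d n m hn f F η x0 σ t).2)
          - gradient (f (iext n m hn σ t)) (WV d n m hn f F η x0 σ t).1
          + (WV d n m hn f F η x0 σ t).2) := rfl

lemma WV_zero (m : ℕ) (hn : 0 < n) (f : Fin n → Vec d → ℝ) (F : Vec d → ℝ) (η : ℝ)
    (x0 : Vec d) (σ : Fin m → Fin n) :
    WV d n m hn f F η x0 σ 0 = (x0, gradient F x0) := rfl

lemma step_bound (m : ℕ) (hn : 0 < n) (f : Fin n → Vec d → ℝ) (F : Vec d → ℝ)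
    (hF : ∀ w, F w = (∑ i, f i w) / n) (hdiff : ∀ i, Differentiable ℝ (f i))
    (L η : ℝ) (hL : 0 < L)
    (havg : ∀ w w' : Vec d,
      (∑ i, ‖gradient (f i) w - gradient (f i) w'‖ ^ 2) / n ≤ L ^ 2 * ‖w - w'‖ ^ 2)
    (hη0 : 0 < η) (x0 : Vec d) (t : ℕ) (ht : t < m) :
    ∑ σ : Fin m → Fin n,
        ‖gradient F (WV d n m hn f F η x0 σ (t+1)).1 - (WV d n m hn f F η x0 σ (t+1)).2‖ ^ 2
      ≤ ∑ σ : Fin m → Fin n,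
          (‖gradient F (WV d n m hn f F η x0 σ t).1 - (WV d n m hn f F η x0 σ t).2‖ ^ 2
            + L ^ 2 * η ^ 2 * ‖(WV d n m hn f F η x0 σ t).2‖ ^ 2) := by
  classical
  have hn' : (0:ℝ) < (n : ℝ) := Nat.cast_pos.mpr hn
  set idx : Fin m := ⟨t, ht⟩ with hidxdef
  set e := Equiv.funSplitAt idx (Fin n) with he
  have reindex : ∀ g : (Fin m → Fin n) → ℝ,
      ∑ σ : Fin m → Fin n, g σ
        = ∑ r : {j : Fin m // j ≠ idx} → Fin n, ∑ i : Fin n, g (e.symm (i, r)) := by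
    intro g
    rw [Fintype.sum_equiv e g (fun q => g (e.symm q)) fun x => by simp]
    rw [Fintype.sum_prod_type]
    exact Finset.sum_comm
  rw [reindex, reindex]
  apply Finset.sum_le_sum
  intro r _
  set i0 : Fin n := ⟨0, hn⟩ with hi0
  have hprefix : ∀ i : Fin n,
      WV d n m hn f F η x0 (e.symm (i, r)) t = WV d n m hn f F η x0 (e.symm (i0, r)) t := by
    intro i
    apply innerSeq_congr
    intro k hk
    by_cases hkm : k < m
    · have hne : (⟨k, hkm⟩ : Fin m) ≠ idx := by
        simp only [hidxdef, ne_eq, Fin.mk.injEq]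
        omega
      simp [iext, hkm, he, Equiv.funSplitAt_symm_apply, hne]
    · simp [iext, hkm]
  have hidx : ∀ i : Fin n, iext n m hn (e.symm (i, r)) t = i := by
    intro i
    simp [iext, ht, he, Equiv.funSplitAt_symm_apply, hidxdef]
  set w : Vec d := (WV d n m hn f F η x0 (e.symm (i0, r)) t).1 with hw
  set v : Vec d := (WV d n m hn f F η x0 (e.symm (i0, r)) t).2 with hv
  set w' : Vec d := w - η • v with hw'
  have hW1 : ∀ i : Fin n, (WV d n m hn f F η x0 (e.symm (i, r)) (t+1)).1 = w' := by
    intro i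
    rw [WV_succ]
    simp only [hprefix i]
    rfl
  have hV1 : ∀ i : Fin n,
      (WV d n m hn f F η x0 (e.symm (i, r)) (t+1)).2
        = gradient (f i) w' - gradient (f i) w + v := by
    intro i
    rw [WV_succ]
    simp only [hprefix i, hidx i]
    rfl
  simp only [fun i : Fin n => hW1 i, fun i : Fin n => hV1 i, fun i : Fin n => hprefix i]
  -- now sums over i with fixed w, v, w'
  set X : Fin n → Vec d := fun j => gradient (f j) w' - gradient (f j) w with hX
  set Xb : Vec d := (n : ℝ)⁻¹ • ∑ j, X j with hXb
  have hgF : gradient F w' = gradient F w + Xb := by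
    rw [(gradF_formula hn f F hF hdiff w').gradient, (gradF_formula hn f F hF hdiff w).gradient,
      hXb, hX]
    rw [Finset.sum_sub_distrib, smul_sub]
    abel
  have hsummand : ∀ i : Fin n,
      gradient F w' - (gradient (f i) w' - gradient (f i) w + v)
        = (gradient F w - v) + Xb - X i := by
    intro i
    rw [hgF, hX]
    beta_reduce
    abel
  rw [Finset.sum_congr rfl fun i _ => by rw [hsummand i]]
  rw [var_identity n hn (gradient F w - v) X]
  rw [Finset.sum_const, card_univ, Fintype.card_fin, nsmul_eq_mul]
  have hX2 : ∑ i, ‖X i‖ ^ 2 ≤ (n : ℝ) * (L ^ 2 * (η ^ 2 * ‖v‖ ^ 2)) := by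
    have h := havg w' w
    rw [div_le_iff₀ hn'] at h
    have hnorm : ‖w' - w‖ ^ 2 = η ^ 2 * ‖v‖ ^ 2 := by
      have : w' - w = -(η • v) := by rw [hw']; abel
      rw [this, norm_neg, norm_smul, Real.norm_eq_abs, abs_of_nonneg hη0.le, mul_pow]
    rw [hnorm] at h
    calc ∑ i, ‖X i‖ ^ 2 = ∑ i, ‖gradient (f i) w' - gradient (f i) w‖ ^ 2 := rfl
      _ ≤ L ^ 2 * (η ^ 2 * ‖v‖ ^ 2) * n := h
      _ = (n : ℝ) * (L ^ 2 * (η ^ 2 * ‖v‖ ^ 2)) := by ring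
  have hXb2 : (0:ℝ) ≤ (n : ℝ) * ‖Xb‖ ^ 2 := by positivity
  nlinarith [hX2, hXb2]

lemma diff_bound (m : ℕ) (hn : 0 < n) (f : Fin n → Vec d → ℝ) (F : Vec d → ℝ)
    (hF : ∀ w, F w = (∑ i, f i w) / n) (hdiff : ∀ i, Differentiable ℝ (f i))
    (L η : ℝ) (hL : 0 < L)
    (havg : ∀ w w' : Vec d,
      (∑ i, ‖gradient (f i) w - gradient (f i) w'‖ ^ 2) / n ≤ L ^ 2 * ‖w - w'‖ ^ 2)
    (hη0 : 0 < η) (x0 : Vec d) : ∀ t : ℕ, t ≤ m →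
    ∑ σ : Fin m → Fin n,
        ‖gradient F (WV d n m hn f F η x0 σ t).1 - (WV d n m hn f F η x0 σ t).2‖ ^ 2
      ≤ L ^ 2 * η ^ 2 * ∑ j ∈ Finset.range t,
          ∑ σ : Fin m → Fin n, ‖(WV d n m hn f F η x0 σ j).2‖ ^ 2
  | 0, _ => by simp [WV_zero]
  | t+1, ht => by
    have ih := diff_bound m hn f F hF hdiff L η hL havg hη0 x0 t (Nat.le_of_succ_le ht)
    have hs := step_bound m hn f F hF hdiff L η hL havg hη0 x0 t (Nat.lt_of_succ_le ht)
    calc ∑ σ : Fin m → Fin n,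
        ‖gradient F (WV d n m hn f F η x0 σ (t+1)).1 - (WV d n m hn f F η x0 σ (t+1)).2‖ ^ 2
        ≤ ∑ σ : Fin m → Fin n,
          (‖gradient F (WV d n m hn f F η x0 σ t).1 - (WV d n m hn f F η x0 σ t).2‖ ^ 2
            + L ^ 2 * η ^ 2 * ‖(WV d n m hn f F η x0 σ t).2‖ ^ 2) := hs
      _ = (∑ σ : Fin m → Fin n,
            ‖gradient F (WV d n m hn f F η x0 σ t).1 - (WV d n m hn f F η x0 σ t).2‖ ^ 2)
          + L ^ 2 * η ^ 2 * ∑ σ : Fin m → Fin n, ‖(WV d n m hn f F η x0 σ t).2‖ ^ 2 := by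
          rw [Finset.sum_add_distrib, ← Finset.mul_sum]
      _ ≤ L ^ 2 * η ^ 2 * (∑ j ∈ Finset.range t,
              ∑ σ : Fin m → Fin n, ‖(WV d n m hn f F η x0 σ j).2‖ ^ 2)
          + L ^ 2 * η ^ 2 * ∑ σ : Fin m → Fin n, ‖(WV d n m hn f F η x0 σ t).2‖ ^ 2 := by
          linarith
      _ = L ^ 2 * η ^ 2 * ∑ j ∈ Finset.range (t+1),
            ∑ σ : Fin m → Fin n, ‖(WV d n m hn f F η x0 σ j).2‖ ^ 2 := by
          rw [Finset.sum_range_succ]; ring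

lemma telescope (m : ℕ) (hn : 0 < n) (f : Fin n → Vec d → ℝ) (F : Vec d → ℝ)
    (L η : ℝ) (hFdiff : Differentiable ℝ F)
    (hlip : ∀ a b : Vec d, ‖gradient F a - gradient F b‖ ≤ L * ‖a - b‖)
    (x0 : Vec d) (σ : Fin m → Fin n) : ∀ T : ℕ,
    F (WV d n m hn f F η x0 σ T).1 ≤ F x0 + ∑ t ∈ Finset.range T,
      (-(η/2) * ‖gradient F (WV d n m hn f F η x0 σ t).1‖ ^ 2
        - (η/2*(1-L*η)) * ‖(WV d n m hn f F η x0 σ t).2‖ ^ 2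
        + (η/2) * ‖gradient F (WV d n m hn f F η x0 σ t).1 - (WV d n m hn f F η x0 σ t).2‖ ^ 2)
  | 0 => by simp [WV_zero]
  | T+1 => by
    have ih := telescope m hn f F L η hFdiff hlip x0 σ T
    set g : Vec d := gradient F (WV d n m hn f F η x0 σ T).1 with hg
    set v : Vec d := (WV d n m hn f F η x0 σ T).2 with hv
    have hstep : (WV d n m hn f F η x0 σ (T+1)).1 = (WV d n m hn f F η x0 σ T).1 - η • v := by
      rw [WV_succ]
    have hd := descent_lemma hFdiff hlip (WV d n m hn f F η x0 σ T).1
      (WV d n m hn f F η x0 σ (T+1)).1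
    rw [hstep] at hd
    have hsub : (WV d n m hn f F η x0 σ T).1 - η • v - (WV d n m hn f F η x0 σ T).1
        = -(η • v) := by abel
    rw [hsub] at hd
    have hinner : ⟪g, -(η • v)⟫ = -(η * ⟪g, v⟫) := by
      rw [inner_neg_right, real_inner_smul_right]
    have hnorm : ‖-(η • v)‖ ^ 2 = η ^ 2 * ‖v‖ ^ 2 := by
      rw [norm_neg, norm_smul, Real.norm_eq_abs, mul_pow, sq_abs]
    rw [hinner, hnorm] at hd
    have hpol : ‖g - v‖ ^ 2 = ‖g‖ ^ 2 - 2 * ⟪g, v⟫ + ‖v‖ ^ 2 := norm_sub_sq_real g v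
    rw [Finset.sum_range_succ]
    have hL2 : L / 2 * (η ^ 2 * ‖v‖ ^ 2) = η/2 * (L * η) * ‖v‖ ^ 2 := by ring
    -- combine
    have hre : F (WV d n m hn f F η x0 σ T).1
          + (-(η/2) * ‖g‖ ^ 2 - (η/2*(1-L*η)) * ‖v‖ ^ 2 + (η/2) * ‖g - v‖ ^ 2)
        = F (WV d n m hn f F η x0 σ T).1 + -(η * ⟪g, v⟫) + L / 2 * (η ^ 2 * ‖v‖ ^ 2) := by
      rw [hpol]; ring
    have hcomb : F ((WV d n m hn f F η x0 σ T).1 - η • v)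
        ≤ F (WV d n m hn f F η x0 σ T).1
          + (-(η/2) * ‖g‖ ^ 2 - (η/2*(1-L*η)) * ‖v‖ ^ 2 + (η/2) * ‖g - v‖ ^ 2) := by
      linarith [hd, hre]
    rw [hstep]
    calc F ((WV d n m hn f F η x0 σ T).1 - η • v)
        ≤ F (WV d n m hn f F η x0 σ T).1
          + (-(η/2) * ‖g‖ ^ 2 - (η/2*(1-L*η)) * ‖v‖ ^ 2 + (η/2) * ‖g - v‖ ^ 2) := hcomb
      _ ≤ F x0 + ∑ t ∈ Finset.range T,
            (-(η/2) * ‖gradient F (WV d n m hn f F η x0 σ t).1‖ ^ 2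
              - (η/2*(1-L*η)) * ‖(WV d n m hn f F η x0 σ t).2‖ ^ 2
              + (η/2) * ‖gradient F (WV d n m hn f F η x0 σ t).1
                  - (WV d n m hn f F η x0 σ t).2‖ ^ 2)
          + (-(η/2) * ‖g‖ ^ 2 - (η/2*(1-L*η)) * ‖v‖ ^ 2 + (η/2) * ‖g - v‖ ^ 2) := by
            linarith
      _ = _ := by rw [← hg, ← hv, add_assoc]

lemma core_descent (m : ℕ) (hn : 0 < n) (f : Fin n → Vec d → ℝ) (F : Vec d → ℝ)
    (hF : ∀ w, F w = (∑ i, f i w) / n) (hdiff : ∀ i, Differentiable ℝ (f i))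
    (L η : ℝ) (hL : 0 < L)
    (havg : ∀ w w' : Vec d,
      (∑ i, ‖gradient (f i) w - gradient (f i) w'‖ ^ 2) / n ≤ L ^ 2 * ‖w - w'‖ ^ 2)
    (hη0 : 0 < η) (hη : η ≤ 2 / (L * (Real.sqrt (1 + 4 * (m : ℝ)) + 1)))
    (x0 : Vec d) :
    ∑ σ : Fin m → Fin n, F (WV d n m hn f F η x0 σ (m+1)).1
      ≤ ∑ σ : Fin m → Fin n, F x0
        - η / 2 * ∑ t ∈ Finset.range (m+1),
            ∑ σ : Fin m → Fin n, ‖gradient F (WV d n m hn f F η x0 σ t).1‖ ^ 2 := by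
  have hFdiff : Differentiable ℝ F :=
    fun w => (gradF_formula hn f F hF hdiff w).differentiableAt
  have hlip : ∀ a b : Vec d, ‖gradient F a - gradient F b‖ ≤ L * ‖a - b‖ :=
    gradF_lip hn f F hF hdiff hL havg
  -- abbreviations
  set A : ℕ → ℝ := fun t => ∑ σ : Fin m → Fin n,
    ‖gradient F (WV d n m hn f F η x0 σ t).1‖ ^ 2 with hA
  set B : ℕ → ℝ := fun t => ∑ σ : Fin m → Fin n, ‖(WV d n m hn f F η x0 σ t).2‖ ^ 2 with hB
  set C : ℕ → ℝ := fun t => ∑ σ : Fin m → Fin n,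
    ‖gradient F (WV d n m hn f F η x0 σ t).1 - (WV d n m hn f F η x0 σ t).2‖ ^ 2 with hC
  have h1 : ∑ σ : Fin m → Fin n, F (WV d n m hn f F η x0 σ (m+1)).1
      ≤ ∑ σ : Fin m → Fin n, (F x0 + ∑ t ∈ Finset.range (m+1),
        (-(η/2) * ‖gradient F (WV d n m hn f F η x0 σ t).1‖ ^ 2
          - (η/2*(1-L*η)) * ‖(WV d n m hn f F η x0 σ t).2‖ ^ 2
          + (η/2) * ‖gradient F (WV d n m hn f F η x0 σ t).1
              - (WV d n m hn f F η x0 σ t).2‖ ^ 2)) :=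
    Finset.sum_le_sum fun σ _ => telescope m hn f F L η hFdiff hlip x0 σ (m+1)
  rw [Finset.sum_add_distrib] at h1
  have h2 : ∑ σ : Fin m → Fin n, ∑ t ∈ Finset.range (m+1),
      (-(η/2) * ‖gradient F (WV d n m hn f F η x0 σ t).1‖ ^ 2
        - (η/2*(1-L*η)) * ‖(WV d n m hn f F η x0 σ t).2‖ ^ 2
        + (η/2) * ‖gradient F (WV d n m hn f F η x0 σ t).1
            - (WV d n m hn f F η x0 σ t).2‖ ^ 2)
      = ∑ t ∈ Finset.range (m+1), (-(η/2) * A t - (η/2*(1-L*η)) * B t + (η/2) * C t) := by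
    rw [Finset.sum_comm]
    apply Finset.sum_congr rfl
    intro t _
    rw [Finset.sum_add_distrib, Finset.sum_sub_distrib, ← Finset.mul_sum, ← Finset.mul_sum,
      ← Finset.mul_sum, hA, hB, hC]
  rw [h2] at h1
  have h3 : ∑ t ∈ Finset.range (m+1), (-(η/2) * A t - (η/2*(1-L*η)) * B t + (η/2) * C t)
      = -(η/2) * ∑ t ∈ Finset.range (m+1), A t
        - (η/2*(1-L*η)) * ∑ t ∈ Finset.range (m+1), B t
        + (η/2) * ∑ t ∈ Finset.range (m+1), C t := by
    rw [Finset.sum_add_distrib, Finset.sum_sub_distrib, ← Finset.mul_sum, ← Finset.mul_sum,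
      ← Finset.mul_sum]
  rw [h3] at h1
  -- nonnegativity
  have hBnn : ∀ t, 0 ≤ B t := fun t => Finset.sum_nonneg fun σ _ => by positivity
  have hBsum : 0 ≤ ∑ t ∈ Finset.range (m+1), B t :=
    Finset.sum_nonneg fun t _ => hBnn t
  -- bound on sum of C
  have hCb : ∀ t, t ≤ m → C t ≤ L ^ 2 * η ^ 2 * ∑ j ∈ Finset.range t, B j :=
    fun t ht => diff_bound m hn f F hF hdiff L η hL havg hη0 x0 t ht
  have hCsum : ∑ t ∈ Finset.range (m+1), C t
      ≤ L ^ 2 * η ^ 2 * ((m : ℝ) * ∑ j ∈ Finset.range (m+1), B j) := by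
    have step1 : ∑ t ∈ Finset.range (m+1), C t
        ≤ ∑ t ∈ Finset.range (m+1), (L ^ 2 * η ^ 2 * ∑ j ∈ Finset.range t, B j) :=
      Finset.sum_le_sum fun t ht => hCb t (by
        have := Finset.mem_range.mp ht; omega)
    have step2 : ∑ t ∈ Finset.range (m+1), (L ^ 2 * η ^ 2 * ∑ j ∈ Finset.range t, B j)
        = L ^ 2 * η ^ 2 * ∑ t ∈ Finset.range (m+1), ∑ j ∈ Finset.range t, B j := by
      rw [Finset.mul_sum]
    have step3 : ∑ t ∈ Finset.range (m+1), ∑ j ∈ Finset.range t, B j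
        ≤ (m : ℝ) * ∑ j ∈ Finset.range (m+1), B j := by
      rw [Finset.sum_range_succ']
      simp only [Finset.range_zero, Finset.sum_empty, add_zero]
      calc ∑ t ∈ Finset.range m, ∑ j ∈ Finset.range (t+1), B j
          ≤ ∑ _t ∈ Finset.range m, ∑ j ∈ Finset.range (m+1), B j := by
            apply Finset.sum_le_sum
            intro t ht
            apply Finset.sum_le_sum_of_subset_of_nonneg
            · apply Finset.range_subset_range.mpr
              have := Finset.mem_range.mp ht; omega
            · intro j _ _; exact Finset.sum_nonneg fun σ _ => by positivity
        _ = (m : ℝ) * ∑ j ∈ Finset.range (m+1), B j := by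
            rw [Finset.sum_const, Finset.card_range, nsmul_eq_mul]
    calc ∑ t ∈ Finset.range (m+1), C t
        ≤ L ^ 2 * η ^ 2 * ∑ t ∈ Finset.range (m+1), ∑ j ∈ Finset.range t, B j := by
          rw [← step2]; exact step1
      _ ≤ L ^ 2 * η ^ 2 * ((m : ℝ) * ∑ j ∈ Finset.range (m+1), B j) := by
          apply mul_le_mul_of_nonneg_left step3 (by positivity)
  -- the learning-rate condition
  have hcoef : (m : ℝ) * (L ^ 2 * η ^ 2) + L * η ≤ 1 := coef_bound m hL hη0 hη
  -- combine
  have hfinal : (η/2) * ∑ t ∈ Finset.range (m+1), C t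
      ≤ (η/2*(1-L*η)) * ∑ t ∈ Finset.range (m+1), B t := by
    calc (η/2) * ∑ t ∈ Finset.range (m+1), C t
        ≤ (η/2) * (L ^ 2 * η ^ 2 * ((m : ℝ) * ∑ j ∈ Finset.range (m+1), B j)) :=
          mul_le_mul_of_nonneg_left hCsum (by positivity)
      _ = ((m : ℝ) * (L ^ 2 * η ^ 2)) * ((η/2) * ∑ j ∈ Finset.range (m+1), B j) := by ring
      _ ≤ (1 - L * η) * ((η/2) * ∑ j ∈ Finset.range (m+1), B j) := by
          apply mul_le_mul_of_nonneg_right (by linarith) (by positivity)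
      _ = (η/2*(1-L*η)) * ∑ t ∈ Finset.range (m+1), B t := by ring
  linarith [h1, hfinal]

end Core

/-- The dite-extension used inside `sarahE`. -/
def sarahExt (n m S : ℕ) (hn : 0 < n) (ω : Fin S → Fin m → Fin n) : ℕ → ℕ → Fin n :=
  fun s t => if h : s < S ∧ t < m then ω ⟨s, h.1⟩ ⟨t, h.2⟩ else ⟨0, hn⟩

lemma sarahE_eq (n m S : ℕ) (hn : 0 < n) (X : (ℕ → ℕ → Fin n) → ℝ) :
    sarahE n m S hn X = (∑ ω : Fin S → Fin m → Fin n, X (sarahExt n m S hn ω)) /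
      (Fintype.card (Fin S → Fin m → Fin n) : ℝ) := rfl

lemma sarahE_comb {n m S : ℕ} {hn : 0 < n} (X Y : (ℕ → ℕ → Fin n) → ℝ)
    (c : ℝ) (T : Finset ℕ) (Z : ℕ → (ℕ → ℕ → Fin n) → ℝ)
    (h : ∑ ω : Fin S → Fin m → Fin n, X (sarahExt n m S hn ω)
        ≤ (∑ ω : Fin S → Fin m → Fin n, Y (sarahExt n m S hn ω))
          - c * ∑ t ∈ T, ∑ ω : Fin S → Fin m → Fin n, Z t (sarahExt n m S hn ω)) :
    sarahE n m S hn X ≤ sarahE n m S hn Y - c * ∑ t ∈ T, sarahE n m S hn (Z t) := by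
  haveI : Nonempty (Fin n) := ⟨⟨0, hn⟩⟩
  have hcard : (0:ℝ) < (Fintype.card (Fin S → Fin m → Fin n) : ℝ) := by
    exact_mod_cast Fintype.card_pos
  rw [sarahE_eq, sarahE_eq]
  have hz : ∑ t ∈ T, sarahE n m S hn (Z t)
      = ∑ t ∈ T, (∑ ω : Fin S → Fin m → Fin n, Z t (sarahExt n m S hn ω)) /
          (Fintype.card (Fin S → Fin m → Fin n) : ℝ) :=
    Finset.sum_congr rfl fun t _ => rfl
  rw [hz, ← Finset.sum_div, ← mul_div_assoc, ← sub_div]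
  gcongr

lemma outerSeq_congr (d n m : ℕ) (f : Fin n → Vec d → ℝ) (F : Vec d → ℝ) (η : ℝ)
    (w0 : Vec d) (ω ω' : ℕ → ℕ → Fin n) : ∀ s : ℕ, (∀ j, j < s → ω j = ω' j) →
    outerSeq d n m f F η w0 ω s = outerSeq d n m f F η w0 ω' s
  | 0, _ => rfl
  | s+1, h => by
    have ih := outerSeq_congr d n m f F η w0 ω ω' s fun j hj => h j (Nat.lt_succ_of_lt hj)
    simp only [outerSeq, ih, h s (Nat.lt_succ_self s)]

/-- **Single outer-loop descent of SARAH** (Statement 0, Lemma 1 of the paper).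
Under average-`L`-smoothness and `0 < η ≤ 2/(L(√(1+4m)+1))`, every outer loop `s ≥ 1`
(here 0-indexed: the `(s+1)`-st outer loop) of SARAH satisfies
`E[F(w_{m+1}^{(s)})] ≤ E[F(w_0^{(s)})] - (η/2) Σ_{t=0}^m E[‖∇F(w_t^{(s)})‖²]`. -/
theorem sarah_single_outer_loop_descent
    (d n m : ℕ) (hn : 0 < n)
    (f : Fin n → Vec d → ℝ) (F : Vec d → ℝ)
    (hF : ∀ w, F w = (∑ i, f i w) / n)
    (hdiff : ∀ i, Differentiable ℝ (f i))
    (L η : ℝ) (hL : 0 < L)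
    (havg : ∀ w w' : Vec d,
      (∑ i, ‖gradient (f i) w - gradient (f i) w'‖ ^ 2) / n ≤ L ^ 2 * ‖w - w'‖ ^ 2)
    (hη0 : 0 < η) (hη : η ≤ 2 / (L * (Real.sqrt (1 + 4 * (m : ℝ)) + 1)))
    (w0 : Vec d) (s : ℕ) :
    sarahE n m (s + 1) hn (fun ω =>
        F (innerSeq d n f F η (outerSeq d n m f F η w0 ω s) (ω s) (m + 1)).1)
      ≤ sarahE n m (s + 1) hn (fun ω =>
            F (innerSeq d n f F η (outerSeq d n m f F η w0 ω s) (ω s) 0).1)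
        - η / 2 * ∑ t ∈ Finset.range (m + 1),
            sarahE n m (s + 1) hn (fun ω =>
              ‖gradient F (innerSeq d n f F η (outerSeq d n m f F η w0 ω s) (ω s) t).1‖ ^ 2) := by
  classical
  haveI : Nonempty (Fin n) := ⟨⟨0, hn⟩⟩
  have hDs : ∀ ω : Fin (s+1) → Fin m → Fin n,
      sarahExt n m (s+1) hn ω s = iext n m hn (ω (Fin.last s)) := by
    intro ω
    funext t
    by_cases h : t < m
    · simp [sarahExt, iext, h, Nat.lt_succ_self, Fin.last]
    · simp [sarahExt, iext, h]
  set E := Fin.snocEquiv (fun _ : Fin (s+1) => (Fin m → Fin n)) with hE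
  have reindex : ∀ g : (Fin (s+1) → Fin m → Fin n) → ℝ,
      ∑ ω : Fin (s+1) → Fin m → Fin n, g ω
        = ∑ p : Fin s → Fin m → Fin n, ∑ a : Fin m → Fin n, g (E (a, p)) := by
    intro g
    rw [← Fintype.sum_equiv E (fun q => g (E q)) g fun q => rfl]
    rw [Fintype.sum_prod_type]
    exact Finset.sum_comm
  set x0p : (Fin s → Fin m → Fin n) → Vec d :=
    fun p => outerSeq d n m f F η w0 (sarahExt n m s hn p) s with hx0p
  have hx0 : ∀ (a : Fin m → Fin n) (p : Fin s → Fin m → Fin n),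
      outerSeq d n m f F η w0 (sarahExt n m (s+1) hn (E (a, p))) s = x0p p := by
    intro a p
    apply outerSeq_congr
    intro j hj
    funext k
    by_cases hk : k < m
    · have hj1 : j < s + 1 := Nat.lt_succ_of_lt hj
      simp only [sarahExt, hj1, hj, hk, and_true, dif_pos]
      have hcs : E (a, p) ⟨j, hj1⟩ = p ⟨j, hj⟩ := by
        have hmk : (⟨j, hj1⟩ : Fin (s+1)) = Fin.castSucc ⟨j, hj⟩ := rfl
        rw [hmk, hE]
        simp only [Fin.snocEquiv_apply]
        exact Fin.snoc_castSucc (α := fun _ : Fin (s+1) => (Fin m → Fin n)) a p ⟨j, hj⟩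
      exact congrFun hcs ⟨k, hk⟩
    · simp [sarahExt, hk]
  have hlast : ∀ (a : Fin m → Fin n) (p : Fin s → Fin m → Fin n),
      E (a, p) (Fin.last s) = a := by
    intro a p
    rw [hE]
    simp only [Fin.snocEquiv_apply]
    exact Fin.snoc_last (α := fun _ : Fin (s+1) => (Fin m → Fin n)) a p
  have main_eq : ∀ (T : ℕ) (a : Fin m → Fin n) (p : Fin s → Fin m → Fin n),
      innerSeq d n f F η (outerSeq d n m f F η w0 (sarahExt n m (s+1) hn (E (a, p))) s)
          (sarahExt n m (s+1) hn (E (a, p)) s) T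
        = WV d n m hn f F η (x0p p) a T := by
    intro T a p
    rw [hDs, hlast, hx0]
    rfl
  have sum_eq : ∀ G : Vec d × Vec d → ℝ, ∀ T : ℕ,
      ∑ ω : Fin (s+1) → Fin m → Fin n,
          G (innerSeq d n f F η (outerSeq d n m f F η w0 (sarahExt n m (s+1) hn ω) s)
              (sarahExt n m (s+1) hn ω s) T)
        = ∑ p : Fin s → Fin m → Fin n, ∑ a : Fin m → Fin n,
            G (WV d n m hn f F η (x0p p) a T) := by
    intro G T
    rw [reindex]
    exact Finset.sum_congr rfl fun p _ => Finset.sum_congr rfl fun a _ => by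
      rw [main_eq]
  apply sarahE_comb
  rw [sum_eq (fun q => F q.1) (m+1), sum_eq (fun q => F q.1) 0]
  have ht : ∀ t : ℕ, ∑ ω : Fin (s+1) → Fin m → Fin n,
      ‖gradient F (innerSeq d n f F η (outerSeq d n m f F η w0 (sarahExt n m (s+1) hn ω) s)
          (sarahExt n m (s+1) hn ω s) t).1‖ ^ 2
      = ∑ p : Fin s → Fin m → Fin n, ∑ a : Fin m → Fin n,
          ‖gradient F (WV d n m hn f F η (x0p p) a t).1‖ ^ 2 :=
    fun t => sum_eq (fun q => ‖gradient F q.1‖ ^ 2) t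
  rw [Finset.sum_congr rfl fun t _ => ht t]
  have hswap : ∑ t ∈ Finset.range (m+1), ∑ p : Fin s → Fin m → Fin n, ∑ a : Fin m → Fin n,
      ‖gradient F (WV d n m hn f F η (x0p p) a t).1‖ ^ 2
      = ∑ p : Fin s → Fin m → Fin n, ∑ t ∈ Finset.range (m+1), ∑ a : Fin m → Fin n,
      ‖gradient F (WV d n m hn f F η (x0p p) a t).1‖ ^ 2 := Finset.sum_comm
  rw [hswap, Finset.mul_sum, ← Finset.sum_sub_distrib]
  apply Finset.sum_le_sum
  intro p _
  have hcore := core_descent m hn f F hF hdiff L η hL havg hη0 hη (x0p p)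
  have h0 : ∑ a : Fin m → Fin n, F (WV d n m hn f F η (x0p p) a 0).1
      = ∑ a : Fin m → Fin n, F (x0p p) := rfl
  rw [h0]
  exact hcore


end
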